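/- Let k ≥ 3 and n be a positive integer. For u, v with n/(2k) ≤ u < v ≤ n/(2(k−1)), the sets Y_{n,u} = {n − i·u : 1 ≤ i ≤ k−1} and Y_{n,v} = {n − i·v : 1 ≤ i ≤ k−1} are disjoint. -/
import Mathlib
set_option maxHeartbeats 800000


theorem stmt_9 (k n u v : ℕ) (hk : 3 ≤ k) (hn : 1 ≤ n)
    (hu : (n : ℝ) / (2 * k) ≤ u) (huv : u < v)
    (hv : (v : ℝ) ≤ n / (2 * ((k : ℝ) - 1))) :
    Disjoint {m : ℤ | ∃ i : ℕ, 1 ≤ i ∧ i ≤ k - 1 ∧ m = (n : ℤ) - i * u}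
             {m : ℤ | ∃ i : ℕ, 1 ≤ i ∧ i ≤ k - 1 ∧ m = (n : ℤ) - i * v} := by
  rw [Set.disjoint_left]
  rintro m ⟨i, hi1, hik, rfl⟩ ⟨j, hj1, hjk, he⟩
  have heq : (i : ℤ) * u = j * v := by linarith [he]
  -- positivity facts
  have hk0 : (0 : ℝ) < 2 * k := by positivity
  have hn0 : (0 : ℝ) < n := by exact_mod_cast hn
  have hu0R : (0 : ℝ) < u := lt_of_lt_of_le (by positivity) hu
  have hu0 : 0 < u := by exact_mod_cast hu0R
  -- j < i
  have hji : j < i := by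
    rcases lt_or_ge j i with h | h
    · exact h
    · exfalso
      have h1 : i * u ≤ j * u := Nat.mul_le_mul_right u h
      have h2 : j * u < j * v := Nat.mul_lt_mul_of_pos_left huv (by omega)
      have : i * u = j * v := by exact_mod_cast heq
      omega
  -- real versions
  have hIJ : (j : ℝ) + 1 ≤ i := by exact_mod_cast hji
  have hJ1 : (1 : ℝ) ≤ j := by exact_mod_cast hj1
  have hJk : (j : ℝ) ≤ (k : ℝ) - 1 := by
    have : (j : ℝ) ≤ ((k - 1 : ℕ) : ℝ) := by exact_mod_cast hjk
    have hc : ((k - 1 : ℕ) : ℝ) = (k : ℝ) - 1 := by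
      have : 1 ≤ k := by omega
      push_cast [Nat.cast_sub this]; ring
    linarith [hc ▸ this]
  have hIk : (i : ℝ) ≤ (k : ℝ) - 1 := by
    have : (i : ℝ) ≤ ((k - 1 : ℕ) : ℝ) := by exact_mod_cast hik
    have hc : ((k - 1 : ℕ) : ℝ) = (k : ℝ) - 1 := by
      have : 1 ≤ k := by omega
      push_cast [Nat.cast_sub this]; ring
    linarith [hc ▸ this]
  have heqR : (i : ℝ) * u = j * v := by exact_mod_cast heq
  have hk1 : (0 : ℝ) < 2 * ((k : ℝ) - 1) := by
    have : (3 : ℝ) ≤ k := by exact_mod_cast hk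
    linarith
  have hu' : (n : ℝ) ≤ u * (2 * k) := (div_le_iff₀ hk0).mp hu
  have hv' : (v : ℝ) * (2 * ((k : ℝ) - 1)) ≤ n := by
    rw [← le_div_iff₀ hk1]; exact hv
  have hkR : (3 : ℝ) ≤ k := by exact_mod_cast hk
  -- derive contradiction
  exfalso
  -- (j+1)*n ≤ (j+1)*u*2k ≤ i*u*2k = j*v*2k
  have h1 : ((j : ℝ) + 1) * n ≤ (j : ℝ) * v * (2 * k) := by
    have a : ((j : ℝ) + 1) * n ≤ ((j : ℝ) + 1) * (u * (2 * k)) :=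
      mul_le_mul_of_nonneg_left hu' (by linarith)
    have b : ((j : ℝ) + 1) * (u * (2 * k)) ≤ (i : ℝ) * u * (2 * k) := by
      nlinarith
    nlinarith
  -- j*v*2k*(k-1) ≤ j*n*k
  have h2 : (j : ℝ) * v * (2 * k) * ((k : ℝ) - 1) ≤ (j : ℝ) * n * k := by
    have := mul_le_mul_of_nonneg_left hv' (show (0:ℝ) ≤ (j:ℝ) * k by positivity)
    nlinarith
  -- so (j+1)*n*(k-1) ≤ j*n*k → n*(k-1-j) ≤ 0 → j ≥ k-1 → i ≥ k, contra
  have h3 : ((j : ℝ) + 1) * n * ((k : ℝ) - 1) ≤ (j : ℝ) * n * k := by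
    have := mul_le_mul_of_nonneg_right h1 (show (0:ℝ) ≤ (k:ℝ) - 1 by linarith)
    nlinarith
  have h4 : (k : ℝ) - 1 ≤ j := by nlinarith
  linarith
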